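/- Let N be a natural number, G a finite index set, and c : G → ℝ with c_g ≥ 0 for all g. If x, x' : G → ℝ satisfy 0 ≤ x_g ≤ x'_g for all g ∈ G, then f_N(Σ_{g∈G} x_g · c_g) ≤ f_N(Σ_{g∈G} x'_g · c_g). In particular, the UE access-limited blockage probability is a monotonically increasing function of the cell coverage indicators and of the per-grid UE densities (which enter through the nonnegative weights c_g). -/

import Mathlib

/-- The UE access-limited blockage function
`f_N(μ) = Σ_{i=N+1}^{∞} (μ^i / i!) · e^{−μ} · (i − N)/i`. -/
noncomputable def ueBlock (N : ℕ) (μ : ℝ) : ℝ :=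
  ∑' i : ℕ, if N < i then
    (μ ^ i / (Nat.factorial i : ℝ)) * Real.exp (-μ) * (((i : ℝ) - (N : ℝ)) / (i : ℝ))
  else 0



noncomputable def gN (N : ℕ) (i : ℕ) : ℝ :=
  if N < i then (((i : ℝ) - (N : ℝ)) / (i : ℝ)) else 0

lemma gN_nonneg (N i : ℕ) : 0 ≤ gN N i := by
  unfold gN; split_ifs with h
  · have hi : (0:ℝ) < i := by exact_mod_cast (Nat.zero_le N).trans_lt h
    have : (N : ℝ) ≤ i := by exact_mod_cast h.le
    exact div_nonneg (by linarith) hi.le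
  · exact le_refl 0

lemma gN_le_one (N i : ℕ) : gN N i ≤ 1 := by
  unfold gN; split_ifs with h
  · have hi : (0:ℝ) < i := by exact_mod_cast (Nat.zero_le N).trans_lt h
    rw [div_le_one hi]
    have : (0:ℝ) ≤ N := Nat.cast_nonneg N
    linarith
  · exact zero_le_one

lemma gN_mono (N : ℕ) {i j : ℕ} (hij : i ≤ j) : gN N i ≤ gN N j := by
  unfold gN; split_ifs with h1 h2 h2
  · -- N < i, N < j
    have hi : (0:ℝ) < i := by exact_mod_cast (Nat.zero_le N).trans_lt h1
    have hj : (0:ℝ) < j := by exact_mod_cast (Nat.zero_le N).trans_lt h2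
    have hij' : (i:ℝ) ≤ j := by exact_mod_cast hij
    have hN : (0:ℝ) ≤ N := Nat.cast_nonneg N
    rw [div_le_div_iff₀ hi hj]
    nlinarith
  · exact absurd (lt_of_lt_of_le h1 hij) h2
  · have hj : (0:ℝ) < j := by exact_mod_cast (Nat.zero_le N).trans_lt h2
    have : (N : ℝ) ≤ j := by exact_mod_cast h2.le
    exact div_nonneg (by linarith) hj.le
  · exact le_refl 0

lemma ueBlock_eq (N : ℕ) (μ : ℝ) :
    ueBlock N μ = ∑' i : ℕ, (μ ^ i / (Nat.factorial i : ℝ)) * Real.exp (-μ) * gN N i := by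
  unfold ueBlock gN
  refine tsum_congr fun i => ?_
  split_ifs with h
  · rfl
  · ring

lemma exp_tsum (x : ℝ) : ∑' i : ℕ, x ^ i / (Nat.factorial i : ℝ) = Real.exp x := by
  rw [Real.exp_eq_exp_ℝ, NormedSpace.exp_eq_tsum_div]

lemma summable_ueBlock (N : ℕ) (μ : ℝ) (hμ : 0 ≤ μ) :
    Summable (fun i : ℕ => (μ ^ i / (Nat.factorial i : ℝ)) * Real.exp (-μ) * gN N i) := by
  refine Summable.of_nonneg_of_le (fun i => ?_) (fun i => ?_)
    (((Real.summable_pow_div_factorial μ).mul_right (Real.exp (-μ))))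
  · have := gN_nonneg N i
    positivity
  · have h1 := gN_le_one N i
    have h0 : 0 ≤ μ ^ i / (Nat.factorial i : ℝ) * Real.exp (-μ) := by positivity
    calc μ ^ i / (Nat.factorial i : ℝ) * Real.exp (-μ) * gN N i
        ≤ μ ^ i / (Nat.factorial i : ℝ) * Real.exp (-μ) * 1 := by
          exact mul_le_mul_of_nonneg_left h1 h0
      _ = μ ^ i / (Nat.factorial i : ℝ) * Real.exp (-μ) := by ring

lemma binom_antidiag (μ ν : ℝ) (n : ℕ) :
    ∑ kl ∈ Finset.HasAntidiagonal.antidiagonal n,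
      μ ^ kl.1 / (Nat.factorial kl.1 : ℝ) * (ν ^ kl.2 / (Nat.factorial kl.2 : ℝ))
      = (μ + ν) ^ n / (Nat.factorial n : ℝ) := by
  rw [add_pow, Finset.sum_div,
    Finset.Nat.sum_antidiagonal_eq_sum_range_succ (fun a b =>
      μ ^ a / (Nat.factorial a : ℝ) * (ν ^ b / (Nat.factorial b : ℝ)))]
  refine Finset.sum_congr rfl fun k hk => ?_
  have hk' : k ≤ n := Nat.lt_succ_iff.mp (Finset.mem_range.mp hk)
  have h : ((n.choose k : ℕ) : ℝ) * (Nat.factorial k : ℝ) * (Nat.factorial (n - k) : ℝ)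
      = (Nat.factorial n : ℝ) := by
    exact_mod_cast congrArg (Nat.cast : ℕ → ℝ) (Nat.choose_mul_factorial_mul_factorial hk')
  have hkf : (Nat.factorial k : ℝ) ≠ 0 := by positivity
  have hnkf : (Nat.factorial (n - k) : ℝ) ≠ 0 := by positivity
  have hnf : (Nat.factorial n : ℝ) ≠ 0 := by positivity
  field_simp
  linear_combination (-(μ ^ k * ν ^ (n - k))) * h

-- tsum over ℕ × ℕ as sum over antidiagonals
lemma tsum_prod_antidiag {F : ℕ × ℕ → ℝ} (hF : Summable F) :
    ∑' p : ℕ × ℕ, F p = ∑' n : ℕ, ∑ kl ∈ Finset.HasAntidiagonal.antidiagonal n, F kl := by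
  calc ∑' p : ℕ × ℕ, F p
      = ∑' x : Σ n : ℕ, Finset.HasAntidiagonal.antidiagonal n, F (Finset.HasAntidiagonal.sigmaAntidiagonalEquivProd x) :=
        (Finset.HasAntidiagonal.sigmaAntidiagonalEquivProd.tsum_eq F).symm
    _ = ∑' (n : ℕ) (kl : Finset.HasAntidiagonal.antidiagonal n),
          F (Finset.HasAntidiagonal.sigmaAntidiagonalEquivProd ⟨n, kl⟩) :=
        (Finset.HasAntidiagonal.sigmaAntidiagonalEquivProd.summable_iff.mpr hF).tsum_sigma'
          (fun n => (hasSum_fintype _).summable)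
    _ = ∑' n : ℕ, ∑ kl ∈ Finset.HasAntidiagonal.antidiagonal n, F kl := by
        refine tsum_congr fun n => ?_
        rw [tsum_fintype]
        exact Finset.sum_attach (Finset.HasAntidiagonal.antidiagonal n) F

set_option maxHeartbeats 1000000 in
lemma ueBlock_mono_add (N : ℕ) {μ ν : ℝ} (hμ : 0 ≤ μ) (hν : 0 ≤ ν) :
    ueBlock N μ ≤ ueBlock N (μ + ν) := by
  set F : ℕ × ℕ → ℝ := fun p =>
    μ ^ p.1 / (Nat.factorial p.1 : ℝ) * (ν ^ p.2 / (Nat.factorial p.2 : ℝ))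
      * Real.exp (-(μ + ν)) * gN N (p.1 + p.2) with hFdef
  set F0 : ℕ × ℕ → ℝ := fun p =>
    (μ ^ p.1 / (Nat.factorial p.1 : ℝ) * Real.exp (-μ) * gN N p.1)
      * (ν ^ p.2 / (Nat.factorial p.2 : ℝ) * Real.exp (-ν)) with hF0def
  have hPμ : Summable fun i : ℕ => μ ^ i / (Nat.factorial i : ℝ) :=
    Real.summable_pow_div_factorial μ
  have hPν : Summable fun i : ℕ => ν ^ i / (Nat.factorial i : ℝ) :=
    Real.summable_pow_div_factorial ν
  have hbig : Summable fun p : ℕ × ℕ =>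
      (μ ^ p.1 / (Nat.factorial p.1 : ℝ)) * (ν ^ p.2 / (Nat.factorial p.2 : ℝ)) :=
    hPμ.mul_of_nonneg hPν (fun i => by positivity) (fun i => by positivity)
  have hFnn : ∀ p : ℕ × ℕ, 0 ≤ F p := by
    intro p
    have := gN_nonneg N (p.1 + p.2)
    simp only [hFdef]
    positivity
  have hFsum : Summable F := by
    refine Summable.of_nonneg_of_le hFnn (fun p => ?_)
      ((hbig.mul_right (Real.exp (-(μ + ν)))))
    simp only [hFdef]
    have h1 := gN_le_one N (p.1 + p.2)
    have h0 : 0 ≤ μ ^ p.1 / (Nat.factorial p.1 : ℝ) * (ν ^ p.2 / (Nat.factorial p.2 : ℝ))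
        * Real.exp (-(μ + ν)) := by positivity
    calc μ ^ p.1 / (Nat.factorial p.1 : ℝ) * (ν ^ p.2 / (Nat.factorial p.2 : ℝ))
        * Real.exp (-(μ + ν)) * gN N (p.1 + p.2)
        ≤ μ ^ p.1 / (Nat.factorial p.1 : ℝ) * (ν ^ p.2 / (Nat.factorial p.2 : ℝ))
        * Real.exp (-(μ + ν)) * 1 := mul_le_mul_of_nonneg_left h1 h0
      _ = _ := by ring
  have hF0sum : Summable F0 :=
    (summable_ueBlock N μ hμ).mul_of_nonneg (hPν.mul_right _)
      (fun i => by have := gN_nonneg N i; positivity) (fun i => by positivity)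
  have step1 : ueBlock N μ = ∑' p : ℕ × ℕ, F0 p := by
    rw [hF0def, ← Summable.tsum_mul_tsum (summable_ueBlock N μ hμ) (hPν.mul_right _) hF0sum]
    rw [tsum_mul_right, exp_tsum ν, ← Real.exp_add]
    simp [ueBlock_eq]
  have step2 : ∑' p : ℕ × ℕ, F0 p ≤ ∑' p : ℕ × ℕ, F p := by
    refine hF0sum.tsum_le_tsum (fun p => ?_) hFsum
    simp only [hF0def, hFdef]
    have hg := gN_mono N (Nat.le_add_right p.1 p.2)
    have hgn := gN_nonneg N p.1
    have h0 : 0 ≤ μ ^ p.1 / (Nat.factorial p.1 : ℝ) * (ν ^ p.2 / (Nat.factorial p.2 : ℝ))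
        * Real.exp (-(μ + ν)) := by positivity
    have hee : Real.exp (-μ) * Real.exp (-ν) = Real.exp (-(μ + ν)) := by
      rw [← Real.exp_add]; ring_nf
    calc μ ^ p.1 / (Nat.factorial p.1 : ℝ) * Real.exp (-μ) * gN N p.1
          * (ν ^ p.2 / (Nat.factorial p.2 : ℝ) * Real.exp (-ν))
        = μ ^ p.1 / (Nat.factorial p.1 : ℝ) * (ν ^ p.2 / (Nat.factorial p.2 : ℝ))
          * Real.exp (-(μ + ν)) * gN N p.1 := by rw [← hee]; ring
      _ ≤ μ ^ p.1 / (Nat.factorial p.1 : ℝ) * (ν ^ p.2 / (Nat.factorial p.2 : ℝ))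
          * Real.exp (-(μ + ν)) * gN N (p.1 + p.2) := mul_le_mul_of_nonneg_left hg h0
  have step3 : ∑' p : ℕ × ℕ, F p = ueBlock N (μ + ν) := by
    rw [tsum_prod_antidiag hFsum, ueBlock_eq]
    refine tsum_congr fun n => ?_
    have : ∀ kl ∈ Finset.HasAntidiagonal.antidiagonal n, F kl =
        μ ^ kl.1 / (Nat.factorial kl.1 : ℝ) * (ν ^ kl.2 / (Nat.factorial kl.2 : ℝ))
          * (Real.exp (-(μ + ν)) * gN N n) := by
      intro kl hkl
      have h := Finset.HasAntidiagonal.mem_antidiagonal.mp hkl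
      simp only [hFdef, h]
      ring
    rw [Finset.sum_congr rfl this, ← Finset.sum_mul, binom_antidiag]
    ring
  calc ueBlock N μ = ∑' p : ℕ × ℕ, F0 p := step1
    _ ≤ ∑' p : ℕ × ℕ, F p := step2
    _ = ueBlock N (μ + ν) := step3

/-- The UE access-limited blockage probability is a monotonically increasing function of
the cell coverage indicators and of the per-grid UE densities. -/
theorem stmt1 {G : Type*} [Fintype G] (N : ℕ) (c : G → ℝ) (hc : ∀ g, 0 ≤ c g)
    (x x' : G → ℝ) (hx : ∀ g, 0 ≤ x g) (hxx' : ∀ g, x g ≤ x' g) :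
    ueBlock N (∑ g, x g * c g) ≤ ueBlock N (∑ g, x' g * c g) := by
  have hmu : 0 ≤ ∑ g, x g * c g :=
    Finset.sum_nonneg fun g _ => mul_nonneg (hx g) (hc g)
  have hle : ∑ g, x g * c g ≤ ∑ g, x' g * c g :=
    Finset.sum_le_sum fun g _ => mul_le_mul_of_nonneg_right (hxx' g) (hc g)
  have h := ueBlock_mono_add N hmu (sub_nonneg.mpr hle)
  simpa using h
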